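/- There exist a continuous map J : ℝ⁴ → M₄(ℝ) with J(p)² = −Id for every p ∈ ℝ⁴ and with J(p) equal to the standard complex structure matrix J₀ for all p outside some bounded set, together with a map u : ℂ → ℝ⁴ which is (real, Fréchet) differentiable at every point of ℂ and satisfies Du(z) ∘ J_std = J(u(z)) ∘ Du(z) at every z ∈ ℂ (where Du(z) : ℝ² → ℝ⁴ is the total derivative), such that u is not continuously differentiable: the partial derivatives of u are unbounded on some neighborhood of a point. That is, a continuous almost complex structure on ℝ⁴ can admit a differentiable J-holomorphic curve which is not of class C¹. -/

import Mathlib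

open Complex MeasureTheory Set Metric Topology
open scoped ContDiff

/-- Pointwise partial derivative of `u` in the `x`-direction (junk value if it does not exist). -/
noncomputable def pdx (u : ℂ → ℂ) (z : ℂ) : ℂ := deriv (fun t : ℝ => u (z + ↑t)) 0

/-- Pointwise partial derivative of `u` in the `y`-direction (junk value if it does not exist). -/
noncomputable def pdy (u : ℂ → ℂ) (z : ℂ) : ℂ := deriv (fun t : ℝ => u (z + ↑t * Complex.I)) 0

/-- Both pointwise partial derivatives `u_x`, `u_y` exist at `z`. -/
def PartialsAt (u : ℂ → ℂ) (z : ℂ) : Prop :=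
  (∃ a, HasDerivAt (fun t : ℝ => u (z + ↑t)) a 0) ∧
  (∃ b, HasDerivAt (fun t : ℝ => u (z + ↑t * Complex.I)) b 0)

/-- The pointwise Wirtinger derivative `∂u/∂z̄ = (u_x + i u_y)/2`. -/
noncomputable def dzbar (u : ℂ → ℂ) (z : ℂ) : ℂ := (pdx u z + Complex.I * pdy u z) / 2

/-- The pointwise Wirtinger derivative `∂u/∂z = (u_x - i u_y)/2`. -/
noncomputable def dzz (u : ℂ → ℂ) (z : ℂ) : ℂ := (pdx u z - Complex.I * pdy u z) / 2

/-- Condition (*): the partial derivatives `u_x`, `u_y` exist at every point of `Ω`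
except possibly at countably many points. -/
def CondStar (u : ℂ → ℂ) (Ω : Set ℂ) : Prop :=
  ∃ S : Set ℂ, S.Countable ∧ ∀ z ∈ Ω \ S, PartialsAt u z

/-- The open rectangle `(a₁,b₁) × (a₂,b₂)` in `ℂ = ℝ²`. -/
def Rect (a₁ b₁ a₂ b₂ : ℝ) : Set ℂ := {z : ℂ | z.re ∈ Set.Ioo a₁ b₁ ∧ z.im ∈ Set.Ioo a₂ b₂}

section Ex43Aux


noncomputable def φ : ℝ → ℝ := Real.smoothTransition
noncomputable def φd : ℝ → ℝ := deriv Real.smoothTransition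

lemma φ_zero {x : ℝ} (h : x ≤ 0) : φ x = 0 := Real.smoothTransition.zero_of_nonpos h
lemma φ_one {x : ℝ} (h : 1 ≤ x) : φ x = 1 := Real.smoothTransition.one_of_one_le h
lemma φ_nonneg (x : ℝ) : 0 ≤ φ x := Real.smoothTransition.nonneg x
lemma φ_le_one (x : ℝ) : φ x ≤ 1 := Real.smoothTransition.le_one x

noncomputable def Lab (a b : ℂ) : ℂ →L[ℝ] ℂ :=
  a • ContinuousLinearMap.id ℝ ℂ + b • (Complex.conjCLE : ℂ ≃L[ℝ] ℂ).toContinuousLinearMap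

lemma Lab_apply (a b w : ℂ) : Lab a b w = a * w + b * (starRingEnd ℂ) w := by
  simp [Lab, smul_eq_mul]

lemma Lab_zero : Lab 0 0 = 0 := by
  refine ContinuousLinearMap.ext fun w => ?_
  simp [Lab_apply]

noncomputable def sf (ζ : ℂ) : ℝ := Complex.normSq ζ

lemma sf_nonneg (ζ : ℂ) : 0 ≤ sf ζ := Complex.normSq_nonneg ζ

noncomputable def dS (ζ : ℂ) : ℂ →L[ℝ] ℝ := (2*ζ.re) • Complex.reCLM + (2*ζ.im) • Complex.imCLM

lemma hasFDerivAt_sf (ζ : ℂ) : HasFDerivAt sf (dS ζ) ζ := by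
  have h3 := ((Complex.reCLM.hasFDerivAt (x := ζ)).mul (Complex.reCLM.hasFDerivAt (x := ζ))).add
    ((Complex.imCLM.hasFDerivAt (x := ζ)).mul (Complex.imCLM.hasFDerivAt (x := ζ)))
  have hfun : sf = fun x : ℂ => Complex.reCLM x * Complex.reCLM x + Complex.imCLM x * Complex.imCLM x := by
    funext x; simp [sf, Complex.normSq_apply]
  rw [hfun]
  refine h3.congr_fderiv ?_
  refine ContinuousLinearMap.ext fun w => ?_
  simp [dS]; ring

noncomputable def Rf (δ : ℝ) (ζ : ℂ) : ℝ :=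
  -4 * φd (3 - 4 * sf ζ) * Real.log (sf ζ + δ) + φ (3 - 4 * sf ζ) / (sf ζ + δ)

noncomputable def Pfun (δ : ℝ) (ζ : ℂ) : ℂ :=
  ((φ (3 - 4 * sf ζ) * Real.log (sf ζ + δ) + sf ζ * Rf δ ζ : ℝ) : ℂ)

noncomputable def Qfun (δ : ℝ) (ζ : ℂ) : ℂ := (Rf δ ζ : ℝ) • ζ^2

noncomputable def g (δ : ℝ) (ζ : ℂ) : ℂ := (φ (3 - 4 * sf ζ) * Real.log (sf ζ + δ) : ℝ) • ζ

lemma hasFDerivAt_g {δ : ℝ} (hδ : 0 < δ) (ζ : ℂ) :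
    HasFDerivAt (g δ) (Lab (Pfun δ ζ) (Qfun δ ζ)) ζ := by
  have hsδ : 0 < sf ζ + δ := add_pos_of_nonneg_of_pos (sf_nonneg ζ) hδ
  have hsf := hasFDerivAt_sf ζ
  have hφ : HasDerivAt φ (φd (3 - 4 * sf ζ)) (3 - 4 * sf ζ) :=
    (((Real.smoothTransition.contDiff (n := ⊤)).differentiable (by simp)) _).hasDerivAt
  have h3 : HasFDerivAt (fun ζ => 3 - 4 * sf ζ) (-((4:ℝ) • dS ζ)) ζ :=
    (hsf.const_mul (4:ℝ)).const_sub 3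
  have h4 : HasFDerivAt (fun ζ => φ (3 - 4 * sf ζ))
      (φd (3 - 4 * sf ζ) • -((4:ℝ) • dS ζ)) ζ := hφ.comp_hasFDerivAt ζ h3
  have h5 : HasFDerivAt (fun ζ => Real.log (sf ζ + δ)) ((sf ζ + δ)⁻¹ • dS ζ) ζ :=
    by have := (Real.hasDerivAt_log hsδ.ne').comp_hasFDerivAt ζ (hsf.add_const δ); exact this
  have h6 := h4.mul h5
  have h7 := h6.smul (hasFDerivAt_id ζ)
  have h8 : HasFDerivAt (g δ) _ ζ := h7
  refine h8.congr_fderiv ?_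
  refine ContinuousLinearMap.ext fun w => ?_
  rw [Lab_apply]
  simp only [ContinuousLinearMap.add_apply, ContinuousLinearMap.smul_apply,
    ContinuousLinearMap.neg_apply, ContinuousLinearMap.smulRight_apply,
    ContinuousLinearMap.id_apply, dS, Complex.reCLM_apply, Complex.imCLM_apply,
    smul_eq_mul, Pfun, Qfun, Rf, id_eq, Complex.real_smul, Pi.mul_apply]
  rw [Complex.ext_iff]
  constructor <;>
  · simp only [Complex.add_re, Complex.add_im, Complex.mul_re, Complex.mul_im,
      Complex.ofReal_re, Complex.ofReal_im, Complex.conj_re, Complex.conj_im, sf,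
      Complex.normSq_apply, pow_two]
    ring

lemma φd_of_neg {x : ℝ} (h : x < 0) : φd x = 0 := by
  have he : Real.smoothTransition =ᶠ[nhds x] (fun _ => (0:ℝ)) := by
    filter_upwards [Iio_mem_nhds h] with y hy using Real.smoothTransition.zero_of_nonpos hy.le
  rw [φd, he.deriv_eq]; exact deriv_const x 0

lemma φd_of_gt {x : ℝ} (h : 1 < x) : φd x = 0 := by
  have he : Real.smoothTransition =ᶠ[nhds x] (fun _ => (1:ℝ)) := by
    filter_upwards [Ioi_mem_nhds h] with y hy using Real.smoothTransition.one_of_one_le hy.le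
  rw [φd, he.deriv_eq]; exact deriv_const x 1

lemma exists_K : ∃ K : ℝ, 0 ≤ K ∧ ∀ x, |φd x| ≤ K := by
  obtain ⟨C, hC⟩ := (isCompact_Icc (a := (0:ℝ)) (b := 1)).exists_bound_of_continuousOn
    (((Real.smoothTransition.contDiff (n := ⊤)).continuous_deriv
      (by exact_mod_cast le_top)).continuousOn)
  refine ⟨max C 0, le_max_right _ _, fun x => ?_⟩
  by_cases h : x ∈ Set.Icc (0:ℝ) 1
  · exact le_trans (hC x h) (le_max_left _ _)
  · rw [Set.mem_Icc, not_and_or] at h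
    rcases h with h | h
    · rw [φd_of_neg (lt_of_not_ge h)]; simp
    · rw [φd_of_gt (lt_of_not_ge h)]; simp

lemma norm_eq_sqrt_sf (ζ : ℂ) : ‖ζ‖ = Real.sqrt (sf ζ) := by
  rw [Complex.norm_def, sf]

lemma sf_eq_norm_sq (ζ : ℂ) : sf ζ = ‖ζ‖^2 := by
  rw [norm_eq_sqrt_sf, Real.sq_sqrt (sf_nonneg ζ)]

lemma g_zero {δ : ℝ} {ζ : ℂ} (h : 1 ≤ sf ζ) : g δ ζ = 0 := by
  rw [g, φ_zero (by linarith)]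
  simp

lemma Rf_zero {δ : ℝ} {ζ : ℂ} (h : 1 ≤ sf ζ) : Rf δ ζ = 0 := by
  rw [Rf, φd_of_neg (by linarith), φ_zero (by linarith)]
  ring

lemma Qfun_zero {δ : ℝ} {ζ : ℂ} (h : 1 ≤ sf ζ) : Qfun δ ζ = 0 := by
  rw [Qfun, Rf_zero h]; simp

lemma abs_log_le {t : ℝ} (h1 : 1/2 ≤ t) (h2 : t ≤ 5/4) : |Real.log t| ≤ 1 := by
  rw [abs_le]
  constructor
  · have h3 : Real.log t⁻¹ ≤ t⁻¹ - 1 := Real.log_le_sub_one_of_pos (by positivity)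
    rw [Real.log_inv] at h3
    have : t⁻¹ ≤ 2 := by rw [inv_le_comm₀ (by linarith) (by norm_num)]; linarith
    linarith
  · have := Real.log_le_sub_one_of_pos (x := t) (by linarith)
    linarith

lemma g_bound {δ : ℝ} (hδ : 0 < δ) (hδ2 : δ ≤ 1/2) (ζ : ℂ) : ‖g δ ζ‖ ≤ 2 := by
  rw [g, norm_smul, Real.norm_eq_abs]
  set s := sf ζ with hs
  have hs0 : 0 ≤ s := sf_nonneg ζ
  by_cases hc : 3 - 4 * s ≤ 0
  · rw [φ_zero hc]; simp
  · push_neg at hc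
    have hs34 : s < 3/4 := by linarith
    have hφ1 : φ (3 - 4*s) ≤ 1 := φ_le_one _
    have hφ0 : 0 ≤ φ (3 - 4*s) := φ_nonneg _
    have hζ : ‖ζ‖ = Real.sqrt s := norm_eq_sqrt_sf ζ
    have htpos : 0 < s + δ := by linarith
    have key : |Real.log (s + δ)| * ‖ζ‖ ≤ 2 := by
      by_cases ht1 : 1 ≤ s + δ
      · have hl0 : 0 ≤ Real.log (s+δ) := Real.log_nonneg ht1
        have hl : Real.log (s+δ) ≤ 1/4 := by
          have := Real.log_le_sub_one_of_pos htpos; linarith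
        have hζ1 : ‖ζ‖ ≤ 1 := by
          rw [hζ]; rw [show (1:ℝ) = Real.sqrt 1 by simp]
          exact Real.sqrt_le_sqrt (by linarith)
        rw [_root_.abs_of_nonneg hl0]
        nlinarith [norm_nonneg ζ]
      · push_neg at ht1
        have hlneg : Real.log (s+δ) ≤ 0 := Real.log_nonpos htpos.le ht1.le
        rw [abs_of_nonpos hlneg]
        have hsq : Real.log (s+δ) = 2 * Real.log (Real.sqrt (s+δ)) := by
          rw [Real.log_sqrt htpos.le]; ring
        have hsqpos : 0 < Real.sqrt (s+δ) := Real.sqrt_pos.2 htpos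
        have h4 : Real.log ((Real.sqrt (s+δ))⁻¹) ≤ (Real.sqrt (s+δ))⁻¹ - 1 :=
          Real.log_le_sub_one_of_pos (by positivity)
        rw [Real.log_inv] at h4
        have h5 : -Real.log (s+δ) ≤ 2 * (Real.sqrt (s+δ))⁻¹ := by
          rw [hsq]; have : 0 < (Real.sqrt (s+δ))⁻¹ := by positivity
          linarith
        have h6 : ‖ζ‖ ≤ Real.sqrt (s+δ) := by
          rw [hζ]; exact Real.sqrt_le_sqrt (by linarith)
        calc -Real.log (s+δ) * ‖ζ‖ ≤ 2 * (Real.sqrt (s+δ))⁻¹ * Real.sqrt (s+δ) := by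
              apply mul_le_mul h5 h6 (norm_nonneg ζ)
              positivity
          _ = 2 := by field_simp
    calc |φ (3-4*s) * Real.log (s+δ)| * ‖ζ‖
        = φ (3-4*s) * (|Real.log (s+δ)| * ‖ζ‖) := by
          rw [abs_mul, _root_.abs_of_nonneg hφ0]; ring
      _ ≤ 1 * 2 := by
          apply mul_le_mul hφ1 key (by positivity) (by norm_num)
      _ = 2 := by norm_num

lemma Q_bound {K δ : ℝ} (hK0 : 0 ≤ K) (hK : ∀ x, |φd x| ≤ K)
    (hδ : 0 < δ) (hδ2 : δ ≤ 1/2) (ζ : ℂ) : ‖Qfun δ ζ‖ ≤ 4*K + 1 := by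
  rw [Qfun, norm_smul, Real.norm_eq_abs, norm_pow, ← sf_eq_norm_sq]
  set s := sf ζ with hs
  have hs0 : 0 ≤ s := sf_nonneg ζ
  have htpos : 0 < s + δ := by linarith
  have hφ1 : φ (3 - 4*s) ≤ 1 := φ_le_one _
  have hφ0 : 0 ≤ φ (3 - 4*s) := φ_nonneg _
  have hfrac : φ (3-4*s) / (s+δ) * s ≤ 1 := by
    rw [div_mul_eq_mul_div, div_le_one htpos]
    nlinarith
  have hfrac0 : 0 ≤ φ (3-4*s) / (s+δ) := by positivity
  by_cases hc1 : s < 1/2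
  · have hd0 : φd (3 - 4*s) = 0 := φd_of_gt (by linarith)
    rw [Rf, hd0]
    have : |(-4 * 0 * Real.log (s+δ) + φ (3-4*s)/(s+δ))| = φ (3-4*s)/(s+δ) := by
      rw [show -4 * 0 * Real.log (s+δ) + φ (3-4*s)/(s+δ) = φ (3-4*s)/(s+δ) by ring]
      exact _root_.abs_of_nonneg hfrac0
    rw [this]
    linarith
  · push_neg at hc1
    by_cases hc2 : s ≤ 3/4
    · have hlog : |Real.log (s + δ)| ≤ 1 := abs_log_le (by linarith) (by linarith)
      have h1 : |Rf δ ζ| ≤ 4*K*|Real.log (s+δ)| + φ (3-4*s)/(s+δ) := by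
        rw [Rf]
        calc |(-4 * φd (3-4*s) * Real.log (s+δ) + φ (3-4*s)/(s+δ))|
            ≤ |(-4 * φd (3-4*s) * Real.log (s+δ))| + |φ (3-4*s)/(s+δ)| := abs_add_le _ _
          _ ≤ 4*K*|Real.log (s+δ)| + φ (3-4*s)/(s+δ) := by
              rw [_root_.abs_of_nonneg hfrac0, abs_mul, abs_mul,
                show |(-4:ℝ)| = 4 from by norm_num]
              have := hK (3 - 4*s)
              have hla : 0 ≤ |Real.log (s+δ)| := abs_nonneg _
              nlinarith [mul_le_mul_of_nonneg_right this hla]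
      calc |Rf δ ζ| * s ≤ (4*K*|Real.log (s+δ)| + φ (3-4*s)/(s+δ)) * s := by
            apply mul_le_mul_of_nonneg_right h1 hs0
        _ = 4*K*(|Real.log (s+δ)| * s) + φ (3-4*s)/(s+δ)*s := by ring
        _ ≤ 4*K*1 + 1 := by
            have hls : |Real.log (s+δ)| * s ≤ 1 := by nlinarith [abs_nonneg (Real.log (s+δ))]
            have h4k : 4*K*(|Real.log (s+δ)| * s) ≤ 4*K*1 := by
              apply mul_le_mul_of_nonneg_left hls (by linarith)
            linarith
        _ ≤ 4*K + 1 := by linarith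
    · push_neg at hc2
      have hd0 : φd (3 - 4*s) = 0 := φd_of_neg (by linarith)
      have hp0 : φ (3 - 4*s) = 0 := φ_zero (by linarith)
      rw [Rf, hd0, hp0]
      simp
      positivity

lemma Pfun_center {δ : ℝ} (hδ : 0 < δ) : Pfun δ 0 = (Real.log δ : ℝ) := by
  have h0 : sf 0 = 0 := by simp [sf]
  rw [Pfun, h0, Rf, h0]
  rw [show (3:ℝ) - 4*0 = 3 by norm_num, φ_one (by norm_num)]
  push_cast
  ring_nf

lemma Qfun_center (δ : ℝ) : Qfun δ 0 = 0 := by simp [Qfun]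
-- chunk 4: sequences and bumps
noncomputable def en (n : ℕ) : ℝ := ((n:ℝ)+1)⁻¹
noncomputable def rn (n : ℕ) : ℝ := (1/2)^n / 8
noncomputable def cnn (n : ℕ) : ℂ := (((1/2:ℝ)^n : ℝ) : ℂ)
noncomputable def dn (n : ℕ) : ℝ := Real.exp (-(((n:ℝ)+1)^2))

lemma en_pos (n : ℕ) : 0 < en n := by rw [en]; positivity
lemma en_le_one (n : ℕ) : en n ≤ 1 := by
  rw [en]
  rw [inv_le_one_iff₀]
  right; linarith [Nat.cast_nonneg (α := ℝ) n]
lemma half_pow_pos (n : ℕ) : 0 < (1/2:ℝ)^n := by positivity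
lemma rn_pos (n : ℕ) : 0 < rn n := by rw [rn]; positivity
lemma dn_pos (n : ℕ) : 0 < dn n := Real.exp_pos _
lemma dn_le (n : ℕ) : dn n ≤ 1/2 := by
  have h1 : dn n ≤ Real.exp (-1) := by
    rw [dn, Real.exp_le_exp]
    have : (1:ℝ) ≤ ((n:ℝ)+1) := by linarith [Nat.cast_nonneg (α := ℝ) n]
    nlinarith
  have h2 : Real.exp (-1) ≤ 1/2 := by
    rw [Real.exp_neg]
    have h3 : (2:ℝ) ≤ Real.exp 1 := by
      have := Real.add_one_le_exp (1:ℝ); linarith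
    rw [inv_le_comm₀ (Real.exp_pos 1) (by norm_num)]
    linarith
  linarith

lemma half_pow_anti {n m : ℕ} (h : n ≤ m) : (1/2:ℝ)^m ≤ (1/2)^n :=
  pow_le_pow_of_le_one (by norm_num) (by norm_num) h

noncomputable def fb (n : ℕ) (z : ℂ) : ℂ :=
  ((en n * rn n : ℝ)) • g (dn n) ((z - cnn n) / ((rn n : ℝ) : ℂ))

noncomputable def Vt (n : ℕ) (z : ℂ) : ℂ :=
  ((en n : ℝ)) • Qfun (dn n) ((z - cnn n) / ((rn n : ℝ) : ℂ))

noncomputable def vv (z : ℂ) : ℂ := ∑' n, fb n z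
noncomputable def VV (z : ℂ) : ℂ := ∑' n, Vt n z

lemma norm_cnn (n : ℕ) : ‖cnn n‖ = (1/2:ℝ)^n := by
  rw [cnn, Complex.norm_real, Real.norm_eq_abs, _root_.abs_of_pos (half_pow_pos n)]

lemma sf_out {n : ℕ} {z : ℂ} (h : rn n < ‖z - cnn n‖) :
    1 ≤ sf ((z - cnn n) / ((rn n : ℝ) : ℂ)) := by
  rw [sf_eq_norm_sq, norm_div, Complex.norm_real, Real.norm_eq_abs,
    _root_.abs_of_pos (rn_pos n)]
  have h1 : 1 ≤ ‖z - cnn n‖ / rn n := by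
    rw [le_div_iff₀ (rn_pos n)]; linarith
  nlinarith [norm_nonneg (z - cnn n), rn_pos n]

lemma fb_out {n : ℕ} {z : ℂ} (h : rn n < ‖z - cnn n‖) : fb n z = 0 := by
  rw [fb, g_zero (sf_out h)]; simp

lemma Vt_out {n : ℕ} {z : ℂ} (h : rn n < ‖z - cnn n‖) : Vt n z = 0 := by
  rw [Vt, Qfun_zero (sf_out h)]; simp

lemma loc {n : ℕ} {z : ℂ} (h : ‖z - cnn n‖ ≤ rn n) :
    (7/8)*(1/2:ℝ)^n ≤ ‖z‖ ∧ ‖z‖ ≤ (9/8)*(1/2:ℝ)^n := by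
  have h1 : ‖cnn n‖ - ‖z‖ ≤ ‖z - cnn n‖ := by
    rw [norm_sub_rev]; exact norm_sub_norm_le _ _
  have h2 : ‖z‖ - ‖cnn n‖ ≤ ‖z - cnn n‖ := norm_sub_norm_le _ _
  rw [norm_cnn] at h1 h2
  rw [rn] at h
  constructor <;> linarith

lemma disj {m n : ℕ} {z : ℂ} (hmn : m ≠ n) (h : ‖z - cnn n‖ ≤ rn n) :
    rn m < ‖z - cnn m‖ := by
  by_contra h'
  push_neg at h'
  obtain ⟨l1, u1⟩ := loc h
  obtain ⟨l2, u2⟩ := loc h'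
  rcases Nat.lt_or_ge m n with hlt | hge
  · have hh := half_pow_anti (show m+1 ≤ n from hlt)
    rw [pow_succ] at hh
    have hp := half_pow_pos m
    nlinarith
  · have hlt : n < m := lt_of_le_of_ne hge (Ne.symm hmn)
    have hh := half_pow_anti (show n+1 ≤ m from hlt)
    rw [pow_succ] at hh
    have hp := half_pow_pos n
    nlinarith

lemma vv_single {n : ℕ} {z : ℂ} (h : ‖z - cnn n‖ ≤ rn n) : vv z = fb n z :=
  tsum_eq_single n (fun m hm => fb_out (disj hm h))

lemma VV_single {n : ℕ} {z : ℂ} (h : ‖z - cnn n‖ ≤ rn n) : VV z = Vt n z :=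
  tsum_eq_single n (fun m hm => Vt_out (disj hm h))

lemma vv_zero {z : ℂ} (h : ∀ n, rn n < ‖z - cnn n‖) : vv z = 0 := by
  rw [vv]
  rw [show (fun n => fb n z) = fun _ => (0:ℂ) from funext fun n => fb_out (h n)]
  exact tsum_zero

lemma VV_zero {z : ℂ} (h : ∀ n, rn n < ‖z - cnn n‖) : VV z = 0 := by
  rw [VV]
  rw [show (fun n => Vt n z) = fun _ => (0:ℂ) from funext fun n => Vt_out (h n)]
  exact tsum_zero

lemma zero_out (n : ℕ) : rn n < ‖(0:ℂ) - cnn n‖ := by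
  rw [zero_sub, norm_neg, norm_cnn, rn]
  have := half_pow_pos n
  linarith

lemma vv_at_zero : vv 0 = 0 := vv_zero zero_out
lemma VV_at_zero : VV 0 = 0 := VV_zero zero_out
-- chunk 5
lemma hasFDerivAt_fb (n : ℕ) (z : ℂ) :
    HasFDerivAt (fb n)
      (Lab ((en n : ℂ) * Pfun (dn n) ((z - cnn n) / ((rn n : ℝ) : ℂ)))
           ((en n : ℂ) * Qfun (dn n) ((z - cnn n) / ((rn n : ℝ) : ℂ)))) z := by
  have hr0 : (rn n : ℝ) ≠ 0 := (rn_pos n).ne'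
  have hr : ((rn n : ℝ) : ℂ) ≠ 0 := by
    simpa using hr0
  simp only [fb, div_eq_mul_inv]
  have hinner : HasFDerivAt (fun w : ℂ => (w - cnn n) * (((rn n : ℝ) : ℂ))⁻¹)
      (((((rn n : ℝ) : ℂ))⁻¹ : ℂ) • ContinuousLinearMap.id ℝ ℂ) z :=
    ((hasFDerivAt_id z).sub_const (cnn n)).mul_const _
  have hcomp := (hasFDerivAt_g (dn_pos n) ((z - cnn n) * (((rn n : ℝ) : ℂ))⁻¹)).comp z hinner
  have hsm := hcomp.const_smul ((en n * rn n : ℝ))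
  refine hsm.congr_fderiv ?_
  refine ContinuousLinearMap.ext fun w => ?_
  rw [Lab_apply]
  simp only [ContinuousLinearMap.coe_smul', Pi.smul_apply, ContinuousLinearMap.coe_comp',
    Function.comp_apply, ContinuousLinearMap.smulRight_apply, ContinuousLinearMap.id_apply,
    Lab_apply, Complex.real_smul, smul_eq_mul, map_mul, map_inv₀, Complex.conj_ofReal]
  push_cast
  field_simp

lemma zone {z : ℂ} (hz : z ≠ 0) :
    ∃ n, ∀ᶠ w in nhds z, ∀ m, m ≠ n → rn m < ‖w - cnn m‖ := by
  classical
  have hz0 : 0 < ‖z‖ := norm_pos_iff.2 hz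
  have hex : ∃ k : ℕ, (9/16:ℝ)*(1/2)^k < ‖z‖ := by
    obtain ⟨k, hk⟩ := exists_pow_lt_of_lt_one hz0 (show (1/2:ℝ) < 1 by norm_num)
    exact ⟨k, by nlinarith [half_pow_pos k]⟩
  refine ⟨Nat.find hex, ?_⟩
  set n := Nat.find hex with hdefn
  have hn : (9/16:ℝ)*(1/2)^n < ‖z‖ := Nat.find_spec hex
  rcases Nat.eq_zero_or_pos n with h0 | hpos
  · have hopenmem : ∀ᶠ w in nhds z, w ∈ {w : ℂ | (9/16:ℝ) < ‖w‖} := by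
      apply (isOpen_lt continuous_const continuous_norm).eventually_mem
      rw [h0] at hn
      simpa using hn
    filter_upwards [hopenmem] with w hw m hm
    rw [h0] at hm
    by_contra hle
    push_neg at hle
    obtain ⟨l1, u1⟩ := loc hle
    have hh : (1/2:ℝ)^m ≤ (1/2)^1 := half_pow_anti (by omega)
    have hw' : (9/16:ℝ) < ‖w‖ := hw
    norm_num at hh
    nlinarith
  · have hmin := Nat.find_min hex (show n - 1 < n by omega)
    push_neg at hmin
    have hsucc : n - 1 + 1 = n := Nat.succ_pred_eq_of_pos hpos
    have h2 : (1/2:ℝ)^(n-1) = 2*(1/2)^n := by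
      conv_rhs => rw [← hsucc]
      rw [pow_succ]; ring
    have hup : ‖z‖ ≤ (9/8:ℝ)*(1/2)^n := by
      rw [h2] at hmin; linarith
    have hopenmem : ∀ᶠ w in nhds z,
        w ∈ {w : ℂ | (9/16:ℝ)*(1/2)^n < ‖w‖} ∩ {w : ℂ | ‖w‖ < (5/4:ℝ)*(1/2)^n} := by
      apply IsOpen.eventually_mem
      · exact (isOpen_lt continuous_const continuous_norm).inter
          (isOpen_lt continuous_norm continuous_const)
      · constructor
        · exact hn
        · have := half_pow_pos n
          simp only [Set.mem_setOf_eq]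
          linarith
    filter_upwards [hopenmem] with w hw m hm
    obtain ⟨hw1', hw2'⟩ := hw
    have hw1 : (9/16:ℝ)*(1/2)^n < ‖w‖ := hw1'
    have hw2 : ‖w‖ < (5/4:ℝ)*(1/2)^n := hw2'
    by_contra hle
    push_neg at hle
    obtain ⟨l1, u1⟩ := loc hle
    rcases Nat.lt_or_ge m n with hlt | hge
    · have hh : (1/2:ℝ)^(n-1) ≤ (1/2)^m := half_pow_anti (by omega)
      rw [h2] at hh
      have := half_pow_pos n
      nlinarith
    · have hgt : n < m := lt_of_le_of_ne hge (Ne.symm hm)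
      have hh : (1/2:ℝ)^m ≤ (1/2)^(n+1) := half_pow_anti (by omega)
      rw [pow_succ] at hh
      have := half_pow_pos n
      nlinarith

lemma en_lt {N n : ℕ} {c : ℝ} (hN : 1/((N:ℝ)+1) < c) (h : N < n) : en n < c := by
  have h1 : en n ≤ 1/((N:ℝ)+1) := by
    rw [en, ← one_div]
    apply one_div_le_one_div_of_le
    · positivity
    · have : (N:ℝ) ≤ (n:ℝ) := by exact_mod_cast h.le
      linarith
  linarith

lemma master (z : ℂ) : ∃ P : ℂ, HasFDerivAt vv (Lab P (VV z)) z := by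
  by_cases hz : z = 0
  · subst hz
    refine ⟨0, ?_⟩
    rw [VV_at_zero, Lab_zero]
    rw [hasFDerivAt_iff_isLittleO_nhds_zero]
    simp only [zero_add, vv_at_zero, sub_zero, ContinuousLinearMap.zero_apply]
    rw [Asymptotics.isLittleO_iff]
    intro c hc
    obtain ⟨N, hN⟩ := exists_nat_one_div_lt hc
    have hrad : (0:ℝ) < (7/8)*(1/2)^N := by positivity
    filter_upwards [Metric.ball_mem_nhds 0 hrad] with h hh
    rw [Metric.mem_ball, dist_zero_right] at hh
    by_cases hsup : ∃ k, ‖h - cnn k‖ ≤ rn k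
    · obtain ⟨k, hk⟩ := hsup
      obtain ⟨l1, u1⟩ := loc hk
      have hvv : vv h = fb k h := vv_single hk
      have hgb : ‖g (dn k) ((h - cnn k)/((rn k : ℝ):ℂ))‖ ≤ 2 := g_bound (dn_pos k) (dn_le k) _
      have hNk : N < k := by
        by_contra hc2
        push_neg at hc2
        have := half_pow_anti hc2
        nlinarith
      have henc : en k < c := en_lt hN hNk
      have hnorm : ‖vv h‖ ≤ en k * rn k * 2 := by
        rw [hvv, fb, norm_smul, Real.norm_eq_abs,
          _root_.abs_of_pos (mul_pos (en_pos k) (rn_pos k))]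
        exact mul_le_mul_of_nonneg_left hgb (mul_pos (en_pos k) (rn_pos k)).le
      have hfin : en k * rn k * 2 ≤ c * ‖h‖ := by
        rw [rn]
        have h8 : (1/2:ℝ)^k ≤ (8/7)*‖h‖ := by linarith
        have he := en_pos k
        nlinarith [norm_nonneg h]
      linarith
    · push_neg at hsup
      rw [vv_zero (fun k => hsup k)]
      rw [norm_zero]
      positivity
  · obtain ⟨n, hev⟩ := zone hz
    have hz_self : ∀ m, m ≠ n → rn m < ‖z - cnn m‖ := hev.self_of_nhds
    refine ⟨(en n : ℂ) * Pfun (dn n) ((z - cnn n)/((rn n : ℝ):ℂ)), ?_⟩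
    have hVV : VV z = (en n : ℂ) * Qfun (dn n) ((z - cnn n)/((rn n : ℝ):ℂ)) := by
      rw [VV, tsum_eq_single n (fun m hm => Vt_out (hz_self m hm)), Vt, Complex.real_smul]
    rw [hVV]
    apply (hasFDerivAt_fb n z).congr_of_eventuallyEq
    filter_upwards [hev] with w hw
    exact tsum_eq_single n (fun m hm => fb_out (hw m hm))

lemma Qfun_cont {δ : ℝ} (hδ : 0 < δ) : Continuous (Qfun δ) := by
  have hsf : Continuous sf := Complex.continuous_normSq
  have hφ : Continuous φ := Real.smoothTransition.continuous
  have hφd : Continuous φd :=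
    (Real.smoothTransition.contDiff (n := ⊤)).continuous_deriv (by exact_mod_cast le_top)
  have harg : Continuous fun ζ : ℂ => 3 - 4 * sf ζ :=
    continuous_const.sub (continuous_const.mul hsf)
  have hpos : ∀ ζ : ℂ, sf ζ + δ ≠ 0 :=
    fun ζ => (add_pos_of_nonneg_of_pos (sf_nonneg ζ) hδ).ne'
  have hlog : Continuous fun ζ : ℂ => Real.log (sf ζ + δ) := by
    rw [continuous_iff_continuousAt]
    intro ζ
    exact ContinuousAt.comp (x := ζ) (f := fun ζ : ℂ => sf ζ + δ)
      (Real.continuousAt_log (hpos ζ)) ((hsf.add continuous_const).continuousAt)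
  have hRf : Continuous (Rf δ) := by
    apply Continuous.add
    · exact (continuous_const.mul (hφd.comp harg)).mul hlog
    · exact (hφ.comp harg).div (hsf.add continuous_const) hpos
  exact hRf.smul (continuous_pow 2)

lemma Vt_cont (n : ℕ) : Continuous (Vt n) := by
  show Continuous ((en n : ℝ) • fun z => Qfun (dn n) ((z - cnn n) / ((rn n : ℝ) : ℂ)))
  apply Continuous.const_smul
  exact (Qfun_cont (dn_pos n)).comp ((continuous_id.sub continuous_const).div_const _)

lemma VV_cont : Continuous VV := by
  obtain ⟨K, hK0, hK⟩ := exists_K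
  rw [continuous_iff_continuousAt]
  intro z
  by_cases hz : z = 0
  · subst hz
    rw [Metric.continuousAt_iff]
    intro ε hε
    have hC : (0:ℝ) < 4*K + 1 := by linarith
    obtain ⟨N, hN⟩ := exists_nat_one_div_lt (show (0:ℝ) < ε / (4*K+1) by positivity)
    refine ⟨(7/8)*(1/2)^N, by positivity, ?_⟩
    intro w hw
    rw [dist_zero_right] at hw
    rw [VV_at_zero, dist_zero_right]
    by_cases hsup : ∃ k, ‖w - cnn k‖ ≤ rn k
    · obtain ⟨k, hk⟩ := hsup
      obtain ⟨l1, u1⟩ := loc hk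
      have hNk : N < k := by
        by_contra hc2
        push_neg at hc2
        have := half_pow_anti hc2
        nlinarith
      have henc : en k < ε/(4*K+1) := en_lt hN hNk
      have hQ : ‖Qfun (dn k) ((w - cnn k)/((rn k : ℝ):ℂ))‖ ≤ 4*K+1 :=
        Q_bound hK0 hK (dn_pos k) (dn_le k) _
      rw [VV_single hk, Vt, norm_smul, Real.norm_eq_abs, _root_.abs_of_pos (en_pos k)]
      calc en k * ‖Qfun (dn k) ((w - cnn k)/((rn k : ℝ):ℂ))‖ ≤ en k * (4*K+1) := by
            exact mul_le_mul_of_nonneg_left hQ (en_pos k).le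
        _ < (ε/(4*K+1)) * (4*K+1) := by
            apply mul_lt_mul_of_pos_right henc hC
        _ = ε := by field_simp
    · push_neg at hsup
      rw [VV_zero (fun k => hsup k), norm_zero]
      exact hε
  · obtain ⟨n, hev⟩ := zone hz
    apply (Vt_cont n).continuousAt.congr
    filter_upwards [hev] with w hw
    exact (tsum_eq_single n (fun m hm => Vt_out (hw m hm))).symm
-- chunk 6 : assembly
noncomputable def CLM4 (L : ℂ →L[ℝ] ℂ) : ℂ →L[ℝ] (Fin 4 → ℝ) :=
  ContinuousLinearMap.pi
    ![Complex.reCLM, Complex.imCLM, Complex.reCLM.comp L, Complex.imCLM.comp L]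

noncomputable def uu (z : ℂ) : Fin 4 → ℝ := ![z.re, z.im, (vv z).re, (vv z).im]

noncomputable def zp (p : Fin 4 → ℝ) : ℂ := (p 0 : ℂ) + (p 1 : ℝ) * Complex.I

noncomputable def ψp (p : Fin 4 → ℝ) : ℝ := max 0 (min 1 (2 - (p 2)^2 - (p 3)^2))

noncomputable def cp (p : Fin 4 → ℝ) : ℂ := (-2) * Complex.I * VV (zp p) * (ψp p : ℝ)

noncomputable def JJ (p : Fin 4 → ℝ) : Matrix (Fin 4) (Fin 4) ℝ :=
  Matrix.of ![![0, -1, 0, 0], ![1, 0, 0, 0],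
    ![(cp p).re, (cp p).im, 0, -1], ![(cp p).im, -(cp p).re, 1, 0]]

lemma hasFDerivAt_uu {L : ℂ →L[ℝ] ℂ} {z : ℂ} (h : HasFDerivAt vv L z) :
    HasFDerivAt uu (CLM4 L) z := by
  rw [hasFDerivAt_pi']
  intro i
  fin_cases i
  · refine Complex.reCLM.hasFDerivAt.congr_fderiv ?_
    refine ContinuousLinearMap.ext fun w => ?_
    simp [CLM4, uu]
  · refine Complex.imCLM.hasFDerivAt.congr_fderiv ?_
    refine ContinuousLinearMap.ext fun w => ?_
    simp [CLM4, uu]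
  · refine (Complex.reCLM.hasFDerivAt.comp z h).congr_fderiv ?_
    refine ContinuousLinearMap.ext fun w => ?_
    simp [CLM4, uu]
  · refine (Complex.imCLM.hasFDerivAt.comp z h).congr_fderiv ?_
    refine ContinuousLinearMap.ext fun w => ?_
    simp [CLM4, uu]

lemma rn_le (n : ℕ) : rn n ≤ 1/8 := by
  rw [rn]
  have h1 : (1/2:ℝ)^n ≤ 1 := pow_le_one₀ (by norm_num) (by norm_num)
  linarith

lemma vv_bound (z : ℂ) : ‖vv z‖ ≤ 1/4 := by
  by_cases hsup : ∃ k, ‖z - cnn k‖ ≤ rn k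
  · obtain ⟨k, hk⟩ := hsup
    rw [vv_single hk, fb, norm_smul, Real.norm_eq_abs,
      _root_.abs_of_pos (mul_pos (en_pos k) (rn_pos k))]
    have hgb : ‖g (dn k) ((z - cnn k)/((rn k : ℝ):ℂ))‖ ≤ 2 := g_bound (dn_pos k) (dn_le k) _
    have h1 : en k * rn k ≤ 1/8 := by
      have := en_le_one k
      have := rn_le k
      have := en_pos k
      have := rn_pos k
      nlinarith
    calc en k * rn k * ‖g (dn k) ((z - cnn k)/((rn k : ℝ):ℂ))‖
        ≤ en k * rn k * 2 := by
          exact mul_le_mul_of_nonneg_left hgb (mul_pos (en_pos k) (rn_pos k)).le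
      _ ≤ 1/4 := by nlinarith
  · push_neg at hsup
    rw [vv_zero hsup, norm_zero]
    norm_num

lemma uu_apply (z : ℂ) :
    uu z 0 = z.re ∧ uu z 1 = z.im ∧ uu z 2 = (vv z).re ∧ uu z 3 = (vv z).im := by
  refine ⟨rfl, rfl, rfl, rfl⟩

lemma zp_uu (z : ℂ) : zp (uu z) = z := by
  show ((z.re : ℝ) : ℂ) + (z.im : ℝ) * Complex.I = z
  exact Complex.re_add_im z

lemma ψp_uu (z : ℂ) : ψp (uu z) = 1 := by
  have h := vv_bound z
  have hsq : (vv z).re^2 + (vv z).im^2 ≤ 1 := by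
    have h1 : Complex.normSq (vv z) = ‖vv z‖^2 := sf_eq_norm_sq (vv z)
    rw [Complex.normSq_apply] at h1
    nlinarith [norm_nonneg (vv z)]
  show max 0 (min 1 (2 - ((vv z).re)^2 - ((vv z).im)^2)) = 1
  rw [min_eq_left (by linarith), max_eq_right (by linarith)]

lemma cp_uu (z : ℂ) : cp (uu z) = (-2) * Complex.I * VV z := by
  rw [cp, zp_uu, ψp_uu]
  simp

lemma JJ_sq (p : Fin 4 → ℝ) : JJ p * JJ p = -1 := by
  ext i j
  fin_cases i <;> fin_cases j <;>
    simp [JJ, Matrix.mul_apply, Fin.sum_univ_four, Matrix.one_apply] <;> ring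

lemma cp_cont : Continuous cp := by
  have h1 : Continuous zp :=
    (Complex.continuous_ofReal.comp (continuous_apply 0)).add
      ((Complex.continuous_ofReal.comp (continuous_apply 1)).mul continuous_const)
  have h2 : Continuous ψp := by
    apply Continuous.max continuous_const
    apply Continuous.min continuous_const
    apply Continuous.sub
    · exact (continuous_const.sub ((continuous_apply 2).pow 2))
    · exact (continuous_apply 3).pow 2
  exact (continuous_const.mul (VV_cont.comp h1)).mul (Complex.continuous_ofReal.comp h2)

lemma JJ_cont : Continuous JJ := by
  have hre : Continuous fun p => (cp p).re := Complex.continuous_re.comp cp_cont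
  have him : Continuous fun p => (cp p).im := Complex.continuous_im.comp cp_cont
  apply continuous_pi
  intro i
  apply continuous_pi
  intro j
  fin_cases i <;> fin_cases j <;>
    simp only [JJ, Matrix.of_apply, Matrix.cons_val', Matrix.cons_val_zero, Matrix.cons_val_one,
      Matrix.head_cons, Matrix.empty_val', Matrix.cons_val_fin_one, Matrix.head_fin_const,
      Matrix.cons_val_two, Matrix.cons_val_three, Matrix.tail_cons] <;>
    first
      | exact continuous_const
      | exact hre
      | exact him
      | exact hre.neg
      | exact him.neg

lemma JJ_std {p : Fin 4 → ℝ} (h : cp p = 0) :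
    JJ p = Matrix.of ![![0, -1, 0, 0], ![1, 0, 0, 0], ![0, 0, 0, -1], ![0, 0, 1, 0]] := by
  rw [JJ, h]
  norm_num

lemma VV_far {z : ℂ} (h : (2:ℝ) ≤ ‖z‖) : VV z = 0 := by
  apply VV_zero
  intro n
  have h1 : ‖z - cnn n‖ ≥ ‖z‖ - ‖cnn n‖ := by
    have := norm_sub_norm_le z (cnn n)
    linarith [norm_sub_norm_le z (cnn n)]
  rw [norm_cnn] at h1
  have h2 : (1/2:ℝ)^n ≤ 1 := pow_le_one₀ (by norm_num) (by norm_num)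
  have h3 := rn_le n
  linarith

lemma JJ_bounded : ∃ s : Set (Fin 4 → ℝ), Bornology.IsBounded s ∧ ∀ p ∉ s,
    JJ p = Matrix.of ![![0, -1, 0, 0], ![1, 0, 0, 0], ![0, 0, 0, -1], ![0, 0, 1, 0]] := by
  refine ⟨Metric.closedBall 0 10, Metric.isBounded_closedBall, ?_⟩
  intro p hp
  apply JJ_std
  by_cases h23 : (p 2)^2 + (p 3)^2 ≥ 2
  · have : ψp p = 0 := by
      rw [ψp, max_eq_left]
      apply min_le_of_right_le
      linarith
    rw [cp, this]
    simp
  · push_neg at h23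
    by_cases h01 : (p 0)^2 + (p 1)^2 ≥ 4
    · have hz : (2:ℝ) ≤ ‖zp p‖ := by
        have h1 : Complex.normSq (zp p) = (p 0)^2 + (p 1)^2 := by
          rw [zp, Complex.normSq_apply]
          simp [Complex.add_re, Complex.add_im, Complex.mul_re, Complex.mul_im]
          ring
        have h2 : Complex.normSq (zp p) = ‖zp p‖^2 := sf_eq_norm_sq (zp p)
        nlinarith [norm_nonneg (zp p)]
      rw [cp, VV_far hz]
      simp
    · push_neg at h01
      exfalso
      apply hp
      rw [Metric.mem_closedBall, dist_zero_right]
      rw [pi_norm_le_iff_of_nonneg (by norm_num : (0:ℝ) ≤ 10)]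
      intro i
      have habs : ∀ x : ℝ, x^2 ≤ 100 → ‖x‖ ≤ 10 := by
        intro x hx
        rw [Real.norm_eq_abs]
        nlinarith [abs_nonneg x, _root_.sq_abs x]
      fin_cases i
      · show ‖p 0‖ ≤ 10
        exact habs _ (by nlinarith [sq_nonneg (p 1)])
      · show ‖p 1‖ ≤ 10
        exact habs _ (by nlinarith [sq_nonneg (p 0)])
      · show ‖p 2‖ ≤ 10
        exact habs _ (by nlinarith [sq_nonneg (p 3)])
      · show ‖p 3‖ ≤ 10
        exact habs _ (by nlinarith [sq_nonneg (p 2)])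

lemma uu_diff (z : ℂ) : DifferentiableAt ℝ uu z := by
  obtain ⟨P, hL⟩ := master z
  exact (hasFDerivAt_uu hL).differentiableAt

lemma uu_Jhol (z w : ℂ) :
    fderiv ℝ uu z (Complex.I * w) = (JJ (uu z)).mulVec (fderiv ℝ uu z w) := by
  obtain ⟨P, hL⟩ := master z
  rw [(hasFDerivAt_uu hL).fderiv]
  ext i
  fin_cases i <;>
    simp [CLM4, JJ, cp_uu, Lab_apply, Matrix.mulVec, dotProduct, Fin.sum_univ_four,
      Complex.mul_re, Complex.mul_im, Complex.conj_re, Complex.conj_im] <;>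
    ring

lemma uu_unbounded : ¬ ∃ C : ℝ, ∀ z : ℂ, ‖fderiv ℝ uu z‖ ≤ C := by
  rintro ⟨C, hC⟩
  set n := Nat.ceil (max C 0) with hn
  have hCn : C ≤ (n:ℝ) := le_trans (le_max_left _ _) (Nat.le_ceil _)
  -- derivative of vv at cnn n
  have hev : ∀ᶠ w in nhds (cnn n), vv w = fb n w := by
    filter_upwards [Metric.ball_mem_nhds (cnn n) (rn_pos n)] with w hw
    rw [Metric.mem_ball, dist_eq_norm] at hw
    exact vv_single hw.le
  have hd0 := (hasFDerivAt_fb n (cnn n)).congr_of_eventuallyEq hev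
  have hζ : (cnn n - cnn n) / ((rn n : ℝ) : ℂ) = 0 := by
    rw [sub_self, zero_div]
  rw [hζ, Pfun_center (dn_pos n), Qfun_center] at hd0
  have hlog : Real.log (dn n) = -(((n:ℝ)+1)^2) := by
    rw [dn, Real.log_exp]
  rw [hlog] at hd0
  have hc1 : ((en n : ℂ)) * ((-(((n:ℝ)+1)^2) : ℝ) : ℂ) = ((-(((n:ℝ)+1)) : ℝ) : ℂ) := by
    rw [en]
    push_cast
    have hne : ((n:ℂ)+1) ≠ 0 := by
      intro hcon
      have : ((n:ℝ)+1) = 0 := by exact_mod_cast congrArg Complex.re hcon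
      nlinarith [Nat.cast_nonneg (α := ℝ) n]
    field_simp
  rw [hc1] at hd0
  have hmul0 : ((en n : ℂ)) * 0 = 0 := mul_zero _
  rw [hmul0] at hd0
  have hfd := (hasFDerivAt_uu hd0).fderiv
  have hub := hC (cnn n)
  rw [hfd] at hub
  have h1 : ‖CLM4 (Lab ((-(((n:ℝ)+1)) : ℝ) : ℂ) 0) 1‖ ≤ ‖CLM4 (Lab ((-(((n:ℝ)+1)) : ℝ) : ℂ) 0)‖ := by
    apply ContinuousLinearMap.unit_le_opNorm
    simp
  have h2 : ((n:ℝ)+1) ≤ ‖CLM4 (Lab ((-(((n:ℝ)+1)) : ℝ) : ℂ) 0) 1‖ := by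
    have h3 := norm_le_pi_norm (CLM4 (Lab ((-(((n:ℝ)+1)) : ℝ) : ℂ) 0) 1) 2
    have h4 : CLM4 (Lab ((-(((n:ℝ)+1)) : ℝ) : ℂ) 0) 1 2 = -(((n:ℝ)+1)) := by
      simp [CLM4, Lab_apply]
    rw [h4, Real.norm_eq_abs, abs_neg, _root_.abs_of_nonneg (by positivity)] at h3
    exact h3
  have : ((n:ℝ)+1) ≤ C := by linarith
  linarith


end Ex43Aux

/-- Example (ex4.3): a continuous almost complex structure on ℝ⁴ admitting a
differentiable J-holomorphic curve which is not C¹. -/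
theorem stmt19 : ∃ J : (Fin 4 → ℝ) → Matrix (Fin 4) (Fin 4) ℝ, ∃ u : ℂ → (Fin 4 → ℝ),
    Continuous J ∧
    (∀ p, J p * J p = -1) ∧
    (∃ s : Set (Fin 4 → ℝ), Bornology.IsBounded s ∧ ∀ p ∉ s,
      J p = Matrix.of ![![0, -1, 0, 0], ![1, 0, 0, 0], ![0, 0, 0, -1], ![0, 0, 1, 0]]) ∧
    (∀ z, DifferentiableAt ℝ u z) ∧
    (∀ z w : ℂ, fderiv ℝ u z (Complex.I * w) = (J (u z)).mulVec (fderiv ℝ u z w)) ∧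
    (∃ z₀ : ℂ, ∃ U ∈ 𝓝 z₀, ¬ ∃ C : ℝ, ∀ z ∈ U, ‖fderiv ℝ u z‖ ≤ C) := by
  refine ⟨JJ, uu, JJ_cont, JJ_sq, JJ_bounded, uu_diff, uu_Jhol, 0, Set.univ, Filter.univ_mem, ?_⟩
  rintro ⟨C, hC⟩
  exact uu_unbounded ⟨C, fun z => hC z (Set.mem_univ z)⟩
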